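/- Let Σ be a diagonal positive definite d×d matrix, μ ∈ ℝ^d with all μ_i ≠ 0, m := √⟨μ, Σ^{-1}μ⟩, and C := ⟨sign(μ), Σ^{-1}sign(μ)⟩ - ‖Σ^{-1}μ‖_1²/m². Suppose 0 < ε ≤ min_i |μ_i| and Cε²/m² ≤ 1/4. Then the gap G := Φ((-m² + ε‖Σ^{-1}μ‖_1)/‖μ - ε·sign(μ)‖_{Σ^{-1}}) - Φ(-m) satisfies G ≥ (e^{-m²/2}·C·ε²)/(3√(2π)·m). -/

import Mathlib

open MeasureTheory Set

noncomputable def Phi (x : ℝ) : ℝ :=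
  ∫ t in Set.Iic x, (Real.sqrt (2 * Real.pi))⁻¹ * Real.exp (-t ^ 2 / 2)

private lemma gauss_integrable :
    Integrable (fun t : ℝ => (Real.sqrt (2 * Real.pi))⁻¹ * Real.exp (-t ^ 2 / 2)) := by
  have h : (fun t : ℝ => Real.exp (-t ^ 2 / 2)) = fun t : ℝ => Real.exp (-(1/2 : ℝ) * t ^ 2) := by
    funext t; ring_nf
  have h2 := integrable_exp_neg_mul_sq (b := (1/2 : ℝ)) (by norm_num)
  rw [← h] at h2
  exact h2.const_mul _

private lemma Phi_sub {y x : ℝ} (h : y ≤ x) :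
    Phi x - Phi y = ∫ t in Set.Ioc y x, (Real.sqrt (2 * Real.pi))⁻¹ * Real.exp (-t ^ 2 / 2) := by
  have hu : Set.Iic y ∪ Set.Ioc y x = Set.Iic x := Set.Iic_union_Ioc_eq_Iic h
  have hdisj : Disjoint (Set.Iic y) (Set.Ioc y x) := by
    apply Set.disjoint_left.2; rintro t ht ⟨h1, _⟩; exact absurd ht (not_le.2 h1)
  have heq := MeasureTheory.setIntegral_union hdisj measurableSet_Ioc
    (gauss_integrable.integrableOn) (gauss_integrable.integrableOn)
    (f := fun t : ℝ => (Real.sqrt (2 * Real.pi))⁻¹ * Real.exp (-t ^ 2 / 2)) (μ := volume)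
  unfold Phi
  rw [← hu, heq]; ring

private lemma Phi_mono {y x : ℝ} (h : y ≤ x) : Phi y ≤ Phi x := by
  have h2 := Phi_sub h
  have h3 : 0 ≤ ∫ t in Set.Ioc y x, (Real.sqrt (2 * Real.pi))⁻¹ * Real.exp (-t ^ 2 / 2) :=
    setIntegral_nonneg measurableSet_Ioc (fun t _ => by positivity)
  linarith

private lemma Phi_gap {y x : ℝ} (hyx : y ≤ x) (hx : x ≤ 0) :
    (x - y) * ((Real.sqrt (2 * Real.pi))⁻¹ * Real.exp (-y ^ 2 / 2)) ≤ Phi x - Phi y := by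
  rw [Phi_sub hyx]
  have hconst : ∫ _t in Set.Ioc y x, ((Real.sqrt (2 * Real.pi))⁻¹ * Real.exp (-y ^ 2 / 2)) =
      (x - y) * ((Real.sqrt (2 * Real.pi))⁻¹ * Real.exp (-y ^ 2 / 2)) := by
    rw [MeasureTheory.setIntegral_const, measureReal_def, Real.volume_Ioc,
      ENNReal.toReal_ofReal (sub_nonneg.2 hyx), smul_eq_mul]
  rw [← hconst]
  apply MeasureTheory.setIntegral_mono_on
  · exact integrableOn_const (by rw [Real.volume_Ioc]; exact ENNReal.ofReal_ne_top)
  · exact gauss_integrable.integrableOn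
  · exact measurableSet_Ioc
  · intro t ht
    have h1 : y ≤ t := le_of_lt ht.1
    have h2 : t ≤ 0 := le_trans ht.2 hx
    have ht2 : t ^ 2 ≤ y ^ 2 := by nlinarith
    have := Real.exp_le_exp.2 (by linarith : -y ^ 2 / 2 ≤ -t ^ 2 / 2)
    have hnn : (0:ℝ) ≤ (Real.sqrt (2 * Real.pi))⁻¹ := by positivity
    exact mul_le_mul_of_nonneg_left this hnn

private lemma sign_sq {x : ℝ} (hx : x ≠ 0) : Real.sign x * Real.sign x = 1 := by
  rcases Real.sign_apply_eq_of_ne_zero x hx with h | h <;> rw [h] <;> norm_num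

private lemma sign_mul_eq_abs (x : ℝ) : Real.sign x * x = |x| := by
  rcases lt_trichotomy x 0 with h | h | h
  · rw [Real.sign_of_neg h, abs_of_neg h]; ring
  · simp [h]
  · rw [Real.sign_of_pos h, abs_of_pos h]; ring

private lemma key_ineq {T a b C ε : ℝ} (hTpos : 0 < T) (hεann : 0 ≤ ε*a)
    (h9 : C*ε^2 ≤ T/4) (hCT : C*T = T*b - a^2) (hεa2 : ε^2*a^2 ≤ T*(ε*a)) :
    2*(T - 2*ε*a + ε^2*b) ≤ 3*T := by
  nlinarith [mul_le_mul_of_nonneg_left h9 hTpos.le, mul_nonneg hTpos.le hεann]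

set_option maxHeartbeats 1000000 in
theorem gap_lower_bound_diagonal (d : ℕ) (σ : Fin d → ℝ) (hσ : ∀ i, 0 < σ i)
    (μ : Fin d → ℝ) (hμ : ∀ i, μ i ≠ 0)
    (S : Matrix (Fin d) (Fin d) ℝ) (hSdef : S = Matrix.diagonal σ)
    (m C ε : ℝ)
    (hm : m = Real.sqrt (∑ i, μ i * S⁻¹.mulVec μ i))
    (hC : C = (∑ i, Real.sign (μ i) * S⁻¹.mulVec (fun j => Real.sign (μ j)) i)
        - (∑ i, |S⁻¹.mulVec μ i|) ^ 2 / m ^ 2)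
    (hε0 : 0 < ε) (hε1 : ∀ i, ε ≤ |μ i|)
    (hε2 : C * ε ^ 2 / m ^ 2 ≤ 1 / 4)
    (G : ℝ)
    (hG : G = Phi ((-m ^ 2 + ε * ∑ i, |S⁻¹.mulVec μ i|)
          / Real.sqrt (∑ i, (μ i - ε * Real.sign (μ i))
              * S⁻¹.mulVec (fun j => μ j - ε * Real.sign (μ j)) i))
        - Phi (-m)) :
    G ≥ Real.exp (-m ^ 2 / 2) * C * ε ^ 2 / (3 * Real.sqrt (2 * Real.pi) * m) := by
  -- inverse of the diagonal matrix
  have hS : S⁻¹ = Matrix.diagonal (fun i => (σ i)⁻¹) := by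
    apply Matrix.inv_eq_right_inv
    rw [hSdef, Matrix.diagonal_mul_diagonal]
    have : (fun i => σ i * (σ i)⁻¹) = fun _ : Fin d => (1:ℝ) :=
      funext fun i => mul_inv_cancel₀ (hσ i).ne'
    rw [this, Matrix.diagonal_one]
  have hmv : ∀ (v : Fin d → ℝ) (i : Fin d), S⁻¹.mulVec v i = (σ i)⁻¹ * v i := by
    intro v i; rw [hS, Matrix.mulVec_diagonal]
  -- abbreviations
  set T : ℝ := ∑ i, μ i ^ 2 * (σ i)⁻¹ with hTdef
  set a : ℝ := ∑ i, |μ i| * (σ i)⁻¹ with hadef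
  set b : ℝ := ∑ i, (σ i)⁻¹ with hbdef
  -- rewrite the three sums
  have hTs : (∑ i, μ i * S⁻¹.mulVec μ i) = T :=
    Finset.sum_congr rfl fun i _ => by rw [hmv]; ring
  have has : (∑ i, |S⁻¹.mulVec μ i|) = a :=
    Finset.sum_congr rfl fun i _ => by
      rw [hmv, abs_mul, abs_of_pos (inv_pos.2 (hσ i))]; ring
  have hbs : (∑ i, Real.sign (μ i) * S⁻¹.mulVec (fun j => Real.sign (μ j)) i) = b :=
    Finset.sum_congr rfl fun i _ => by
      rw [hmv, show Real.sign (μ i) * ((σ i)⁻¹ * Real.sign (μ i))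
          = (σ i)⁻¹ * (Real.sign (μ i) * Real.sign (μ i)) from by ring,
        sign_sq (hμ i), mul_one]
  have hDs : (∑ i, (μ i - ε * Real.sign (μ i))
      * S⁻¹.mulVec (fun j => μ j - ε * Real.sign (μ j)) i) = T - 2*ε*a + ε^2*b := by
    have hterm : ∀ i : Fin d, (μ i - ε * Real.sign (μ i))
        * S⁻¹.mulVec (fun j => μ j - ε * Real.sign (μ j)) i
        = μ i ^ 2 * (σ i)⁻¹ - 2*ε*(|μ i| * (σ i)⁻¹) + ε^2*(σ i)⁻¹ := by
      intro i
      rw [hmv]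
      have h1 := sign_mul_eq_abs (μ i)
      have h2 := sign_sq (hμ i)
      have : (μ i - ε * Real.sign (μ i)) * ((σ i)⁻¹ * (μ i - ε * Real.sign (μ i)))
          = (σ i)⁻¹ * (μ i ^ 2 - 2*ε*(Real.sign (μ i) * μ i)
            + ε^2*(Real.sign (μ i) * Real.sign (μ i))) := by ring
      rw [this, h1, h2]; ring
    rw [Finset.sum_congr rfl fun i _ => hterm i]
    rw [Finset.sum_add_distrib, Finset.sum_sub_distrib, ← Finset.mul_sum, ← Finset.mul_sum]
  -- basic positivity facts
  have hTnn : 0 ≤ T := Finset.sum_nonneg fun i _ => mul_nonneg (sq_nonneg _) (inv_pos.2 (hσ i)).le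
  have hann : 0 ≤ a := Finset.sum_nonneg fun i _ => mul_nonneg (abs_nonneg _) (inv_pos.2 (hσ i)).le
  have hbnn : 0 ≤ b := Finset.sum_nonneg fun i _ => (inv_pos.2 (hσ i)).le
  have hεann : 0 ≤ ε * a := mul_nonneg hε0.le hann
  -- Cauchy-Schwarz
  have hCS : a ^ 2 ≤ T * b := by
    have h := Finset.sum_mul_sq_le_sq_mul_sq Finset.univ
      (fun i => |μ i| * Real.sqrt (σ i)⁻¹) (fun i => Real.sqrt (σ i)⁻¹)
    have e1 : (∑ i, (|μ i| * Real.sqrt (σ i)⁻¹) * Real.sqrt (σ i)⁻¹) = a :=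
      Finset.sum_congr rfl fun i _ => by
        rw [mul_assoc, Real.mul_self_sqrt (inv_pos.2 (hσ i)).le]
    have e2 : (∑ i, (|μ i| * Real.sqrt (σ i)⁻¹) ^ 2) = T :=
      Finset.sum_congr rfl fun i _ => by
        rw [mul_pow, sq_abs, Real.sq_sqrt (inv_pos.2 (hσ i)).le]
    have e3 : (∑ i, (Real.sqrt (σ i)⁻¹) ^ 2) = b :=
      Finset.sum_congr rfl fun i _ => Real.sq_sqrt (inv_pos.2 (hσ i)).le
    rw [e1, e2, e3] at h
    exact h
  -- ε a ≤ T
  have hεaT : ε * a ≤ T := by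
    rw [hadef, hTdef, Finset.mul_sum]
    apply Finset.sum_le_sum
    intro i _
    have h1 := hε1 i
    have h2 : (0:ℝ) < (σ i)⁻¹ := inv_pos.2 (hσ i)
    have h3 := sq_abs (μ i)
    nlinarith [mul_nonneg (mul_nonneg (sub_nonneg.2 h1) (abs_nonneg (μ i))) h2.le]
  rcases Nat.eq_zero_or_pos d with hd | hd
  · -- degenerate case d = 0
    subst hd
    have hT0 : T = 0 := by simp [hTdef]
    have ha0 : a = 0 := by simp [hadef]
    have hb0 : b = 0 := by simp [hbdef]
    have hm0 : m = 0 := by rw [hm, hTs, hT0, Real.sqrt_zero]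
    have hC0 : C = 0 := by rw [hC, hbs, has, hb0, ha0, hm0]; norm_num
    rw [hG, hC0, hm0]
    norm_num
  · -- main case
    haveI : Nonempty (Fin d) := Fin.pos_iff_nonempty.1 hd
    have hTpos : 0 < T := by
      apply Finset.sum_pos _ Finset.univ_nonempty
      intro i _
      have h1 : 0 < |μ i| := abs_pos.2 (hμ i)
      have h2 : (0:ℝ) < (σ i)⁻¹ := inv_pos.2 (hσ i)
      have h3 : 0 < μ i ^ 2 := by rw [← sq_abs]; exact pow_pos h1 2
      exact mul_pos h3 h2
    have hmpos : 0 < m := by rw [hm, hTs]; exact Real.sqrt_pos.2 hTpos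
    have hm2 : m ^ 2 = T := by rw [hm, hTs]; exact Real.sq_sqrt hTnn
    have hC' : C = b - a ^ 2 / T := by rw [hC, hbs, has, hm2]
    have hCnn : 0 ≤ C := by
      rw [hC', sub_nonneg, div_le_iff₀ hTpos]
      nlinarith [hCS]
    have hCT : C * T = T * b - a ^ 2 := by
      rw [hC']; field_simp
    set D : ℝ := T - 2*ε*a + ε^2*b with hDdef
    have hDnn : 0 ≤ D := by
      rw [← hDs]
      apply Finset.sum_nonneg
      intro i _
      rw [hmv, show (μ i - ε * Real.sign (μ i)) * ((σ i)⁻¹ * (μ i - ε * Real.sign (μ i)))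
          = (σ i)⁻¹ * (μ i - ε * Real.sign (μ i)) ^ 2 from by ring]
      exact mul_nonneg (inv_pos.2 (hσ i)).le (sq_nonneg _)
    clear_value T a b D
    rcases eq_or_lt_of_le hDnn with hD0 | hDpos
    · -- D = 0 : then C = 0 and both sides vanish
      have heq : 2*ε*a = T + ε^2*b := by rw [hDdef] at hD0; linarith
      have h4 : (2*ε*a)^2 = (T + ε^2*b)^2 := by rw [heq]
      have h5 : 4*ε^2*(a^2 - T*b) = (T - ε^2*b)^2 := by
        linear_combination (2*ε*a + T + ε^2*b) * heq
      have h6 : 0 ≤ a^2 - T*b := by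
        have h7 : 0 ≤ 4*ε^2*(a^2 - T*b) := h5 ▸ sq_nonneg _
        have h8 : 0 < 4*ε^2 := by positivity
        nlinarith [h7, h8]
      have hCle : C ≤ 0 := by
        rw [hC', sub_nonpos, le_div_iff₀ hTpos]
        linarith [h6]
      have hC0 : C = 0 := le_antisymm hCle hCnn
      rw [hG, hDs, ← hD0, Real.sqrt_zero, div_zero, hC0]
      simp only [mul_zero, zero_mul, zero_div, ge_iff_le]
      linarith [Phi_mono (by linarith : -m ≤ (0:ℝ))]
    · -- D > 0
      set sD : ℝ := Real.sqrt D with hsDdef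
      have hsDpos : 0 < sD := Real.sqrt_pos.2 hDpos
      have hsD2 : sD ^ 2 = D := Real.sq_sqrt hDnn
      have hxnum : -T + ε*a ≤ 0 := by linarith [hεaT]
      set x : ℝ := (-T + ε*a)/sD with hxdef
      have hxle0 : x ≤ 0 := div_nonpos_of_nonpos_of_nonneg hxnum hsDpos.le
      have hG' : G = Phi x - Phi (-m) := by
        rw [hG, has, hDs, hm2, ← hsDdef, ← hxdef]
      rw [hG', ge_iff_le]
      clear hG hC hm hS hmv hSdef hTs has hbs hDs hTdef hadef hbdef hσ hμ hε1 hG'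
      clear S μ σ
      have hnum2 : (-T + ε*a)^2 = T*D - C*T*ε^2 := by
        linear_combination (-T)*hDdef + ε^2*hCT
      have hx2 : x^2 = (T*D - C*T*ε^2)/D := by
        rw [hxdef, div_pow, hsD2, hnum2]
      have hx2' : x^2 = T*(1 - C*ε^2/D) := by
        rw [hx2]; field_simp
      set u : ℝ := C*ε^2/D with hudef
      have hu0 : 0 ≤ u := div_nonneg (mul_nonneg hCnn (sq_nonneg _)) hDpos.le
      have h1u : 1 - u = x^2/T := by
        rw [eq_div_iff hTpos.ne']
        linear_combination -hx2'
      have hu1 : u ≤ 1 := by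
        have := div_nonneg (sq_nonneg x) hTpos.le
        linarith [h1u]
      have h1 : (-x)^2 ≤ (m - m*u/2)^2 := by
        have e : (m - m*u/2)^2 - (-x)^2 = (m*u)^2/4 := by
          linear_combination (1-u)*hm2 - hx2'
        linarith [sq_nonneg (m*u), e]
      have h2 : -x ≤ m - m*u/2 := by
        refine (pow_le_pow_iff_left₀ (neg_nonneg.2 hxle0) ?_ two_ne_zero).1 h1
        have := mul_le_mul_of_nonneg_left hu1 hmpos.le
        linarith
      have hmu0 : 0 ≤ m*u/2 := by
        have := mul_nonneg hmpos.le hu0; linarith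
      have hxm' : m*u/2 ≤ x + m := by linarith
      have hyx : -m ≤ x := by linarith
      -- the key comparison 2D ≤ 3T
      have hmsq : 0 < m^2 := by positivity
      have h9 : C*ε^2 ≤ T/4 := by
        have h9' := (div_le_iff₀ hmsq).1 hε2
        have h9'' : m^2 = T := hm2
        nlinarith [h9', h9'']
      have hεa2 : ε^2*a^2 ≤ T*(ε*a) := by
        linarith [mul_nonneg hεann (sub_nonneg.2 hεaT)]
      have hkey : 2*D ≤ 3*T := by
        rw [hDdef]
        exact key_ineq hTpos hεann h9 hCT hεa2
      set s2 : ℝ := Real.sqrt (2*Real.pi) with hs2def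
      set E : ℝ := Real.exp (-m^2/2) with hEdef
      have hs2pos : 0 < s2 := Real.sqrt_pos.2 (by positivity)
      have hEpos : 0 < E := Real.exp_pos _
      have hgap := Phi_gap hyx hxle0
      rw [show x - (-m) = x + m from by ring, neg_sq] at hgap
      have hfinal : E * C * ε^2 / (3*s2*m) ≤ (x+m) * (s2⁻¹ * E) := by
        have hle1 : E * C * ε^2 / (3*s2*m) ≤ (m*u/2) * (s2⁻¹ * E) := by
          rw [div_le_iff₀ (by positivity : (0:ℝ) < 3*s2*m), hudef]
          have expand : (m*(C*ε^2/D)/2) * (s2⁻¹*E) * (3*s2*m)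
              = (3*m^2/(2*D)) * (C*ε^2*E) * (s2⁻¹*s2) := by
            field_simp
          rw [expand, inv_mul_cancel₀ hs2pos.ne', mul_one]
          have h12 : 1 ≤ 3*m^2/(2*D) := by
            rw [le_div_iff₀ (by linarith : (0:ℝ) < 2*D), hm2]; linarith [hkey]
          calc E*C*ε^2 = 1*(C*ε^2*E) := by ring
            _ ≤ (3*m^2/(2*D))*(C*ε^2*E) := by
                exact mul_le_mul_of_nonneg_right h12
                  (mul_nonneg (mul_nonneg hCnn (sq_nonneg ε)) hEpos.le)
        exact hle1.trans (mul_le_mul_of_nonneg_right hxm' (by positivity))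
      exact hfinal.trans hgap
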